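/- If r is a rational number that equals the real part of some complex root of unity, then r ∈ {0, 1, -1, 1/2, -1/2}. -/

import Mathlib

theorem stmt_1 (r : ℚ)
    (h : ∃ z : ℂ, (∃ n : ℕ, 0 < n ∧ z ^ n = 1) ∧ z.re = (r : ℝ)) :
    r ∈ ({0, 1, -1, 1/2, -1/2} : Set ℚ) := by
  obtain ⟨z, ⟨n, hn, hzn⟩, hre⟩ := h
  have hnorm : ‖z‖ = 1 := Complex.norm_eq_one_of_pow_eq_one hzn hn.ne'
  have hzne : z ≠ 0 := by
    intro h0; rw [h0] at hnorm; simp at hnorm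
  -- z is integral over ℤ
  have hz : IsIntegral ℤ z := by
    refine ⟨Polynomial.X ^ n - 1, ?_, ?_⟩
    · simpa using Polynomial.monic_X_pow_sub_C (1 : ℤ) hn.ne'
    · simp [hzn]
  -- conj z = z⁻¹ = z ^ (n-1)
  have hconj : (starRingEnd ℂ) z = z ^ (n - 1) := by
    have hz1 : z * (starRingEnd ℂ) z = 1 := by
      rw [Complex.mul_conj]
      norm_cast
      rw [Complex.normSq_eq_norm_sq, hnorm]; norm_num
    have h2 : z * z ^ (n - 1) = 1 := by
      rw [← pow_succ', show n - 1 + 1 = n from Nat.succ_pred_eq_of_pos hn, hzn]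
    have := hz1.trans h2.symm
    exact mul_left_cancel₀ hzne this
  have hint : IsIntegral ℤ (z + (starRingEnd ℂ) z) := by
    rw [hconj]; exact hz.add (hz.pow _)
  have heq : z + (starRingEnd ℂ) z = ((2 * r : ℚ) : ℂ) := by
    rw [Complex.add_conj, hre]
    push_cast
    ring
  rw [heq] at hint
  have hintq : IsIntegral ℤ (2 * r) := by
    have h2 : IsIntegral ℤ (algebraMap ℚ ℂ (2 * r)) := by simpa using hint
    exact (isIntegral_algebraMap_iff (algebraMap ℚ ℂ).injective).mp h2
  obtain ⟨m, hm⟩ := IsIntegrallyClosed.isIntegral_iff.mp hintq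
  have hm' : (m : ℚ) = 2 * r := by exact_mod_cast hm
  -- |r| ≤ 1
  have hb : |(r : ℝ)| ≤ 1 := by
    rw [← hre]
    calc |z.re| ≤ ‖z‖ := Complex.abs_re_le_norm z
    _ = 1 := hnorm
  have hbq : |r| ≤ 1 := by
    rwa [← Rat.cast_abs, ← Rat.cast_one, Rat.cast_le] at hb
  have hmb : |m| ≤ 2 := by
    have h1 : |(m : ℚ)| ≤ 2 := by
      rw [hm', abs_mul, abs_two]
      nlinarith [abs_nonneg r]
    exact_mod_cast h1
  have hr : r = m / 2 := by linarith [hm']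
  obtain ⟨hmb1, hmb2⟩ := abs_le.mp hmb
  simp only [Set.mem_insert_iff, Set.mem_singleton_iff]
  interval_cases m <;> rw [hr] <;> norm_num
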